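/- For all positive real numbers a < b, let ā = (a+b)/2, ǧ = √(ab), and â = (b−a)/(log b − log a). Then 0 ≤ ā − ǧ²/â ≤ (√(ā·â) + ǧ)·(log b − log a). -/

import Mathlib

open Real

private lemma hd1 (x : ℝ) (hx0 : 0 < x) :
    HasDerivAt (fun x : ℝ => x ^ 2 - 1 - 2 * x * Real.log x)
      (2 * x - (2 * Real.log x + 2)) x := by
  have hp : HasDerivAt (fun x : ℝ => x ^ 2 - 1) (2 * x) x := by
    simpa using (hasDerivAt_pow 2 x).sub_const 1
  have hl : HasDerivAt (fun x : ℝ => 2 * x * Real.log x) (2 * Real.log x + 2) x := by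
    have := ((hasDerivAt_id x).const_mul 2).mul (Real.hasDerivAt_log hx0.ne')
    exact this.congr_deriv (by simp [hx0.ne'])
  exact hp.sub hl

private lemma hd2 (x : ℝ) (hx0 : 0 < x) :
    HasDerivAt (fun x : ℝ => (x ^ 2 + 1) * Real.log x - (x ^ 2 - 1))
      (2 * x * Real.log x + (x ^ 2 + 1) * x⁻¹ - 2 * x) x := by
  have hp : HasDerivAt (fun x : ℝ => x ^ 2 + 1) (2 * x) x := by
    simpa using (hasDerivAt_pow 2 x).add_const 1
  have hq : HasDerivAt (fun x : ℝ => x ^ 2 - 1) (2 * x) x := by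
    simpa using (hasDerivAt_pow 2 x).sub_const 1
  exact (hp.mul (Real.hasDerivAt_log hx0.ne')).sub hq

private lemma aux1 (s : ℝ) (hs : 1 ≤ s) : 2 * s * Real.log s ≤ s ^ 2 - 1 := by
  have hmono : MonotoneOn (fun x : ℝ => x ^ 2 - 1 - 2 * x * Real.log x) (Set.Ici 1) := by
    apply monotoneOn_of_deriv_nonneg (convex_Ici 1)
    · apply ContinuousOn.sub
      · exact (continuous_pow 2).continuousOn.sub continuousOn_const
      · exact ((continuous_const.mul continuous_id).continuousOn).mul
          (Real.continuousOn_log.mono (by intro x hx; simp at hx ⊢; intro h; linarith))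
    · intro x hx
      rw [interior_Ici] at hx
      exact (hd1 x (lt_trans one_pos hx)).differentiableAt.differentiableWithinAt
    · intro x hx
      rw [interior_Ici] at hx
      have hx0 : (0:ℝ) < x := lt_trans one_pos hx
      rw [(hd1 x hx0).deriv]
      have := Real.log_le_sub_one_of_pos hx0
      linarith
  have := hmono (Set.self_mem_Ici) (Set.mem_Ici.mpr hs) hs
  simp at this
  linarith

private lemma aux2 (s : ℝ) (hs : 1 ≤ s) : s ^ 2 - 1 ≤ (s ^ 2 + 1) * Real.log s := by
  have hmono : MonotoneOn (fun x : ℝ => (x ^ 2 + 1) * Real.log x - (x ^ 2 - 1)) (Set.Ici 1) := by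
    apply monotoneOn_of_deriv_nonneg (convex_Ici 1)
    · apply ContinuousOn.sub
      · exact ((continuous_pow 2).continuousOn.add continuousOn_const).mul
          (Real.continuousOn_log.mono (by intro x hx; simp at hx ⊢; intro h; linarith))
      · exact (continuous_pow 2).continuousOn.sub continuousOn_const
    · intro x hx
      rw [interior_Ici] at hx
      exact (hd2 x (lt_trans one_pos hx)).differentiableAt.differentiableWithinAt
    · intro x hx
      rw [interior_Ici] at hx
      have hx0 : (0:ℝ) < x := lt_trans one_pos hx
      rw [(hd2 x hx0).deriv]
      have hlog : 1 - x⁻¹ ≤ Real.log x := by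
        have h2 := Real.log_le_sub_one_of_pos (inv_pos.mpr hx0)
        rw [Real.log_inv] at h2
        linarith
      have hxinv : x⁻¹ * x = 1 := inv_mul_cancel₀ hx0.ne'
      nlinarith [sq_nonneg (x - 1), mul_pos hx0 hx0]
  have := hmono (Set.self_mem_Ici) (Set.mem_Ici.mpr hs) hs
  simp at this
  linarith

theorem arith_sub_geomSq_div_logMean_bound (a b : ℝ) (ha : 0 < a) (hab : a < b) :
    0 ≤ (a + b) / 2 - Real.sqrt (a * b) ^ 2 / ((b - a) / (Real.log b - Real.log a)) ∧
    (a + b) / 2 - Real.sqrt (a * b) ^ 2 / ((b - a) / (Real.log b - Real.log a))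
      ≤ (Real.sqrt (((a + b) / 2) * ((b - a) / (Real.log b - Real.log a)))
          + Real.sqrt (a * b)) * (Real.log b - Real.log a) := by
  have hb : 0 < b := lt_trans ha hab
  have hL : 0 < Real.log b - Real.log a := sub_pos.mpr (Real.log_lt_log ha hab)
  set L := Real.log b - Real.log a with hLdef
  set M := (b - a) / L with hMdef
  have hM : 0 < M := div_pos (by linarith) hL
  have hu0 : 0 < Real.sqrt a := Real.sqrt_pos.mpr ha
  have hv0 : 0 < Real.sqrt b := Real.sqrt_pos.mpr hb
  have hu2 : Real.sqrt a ^ 2 = a := Real.sq_sqrt ha.le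
  have hv2 : Real.sqrt b ^ 2 = b := Real.sq_sqrt hb.le
  have huv : Real.sqrt a < Real.sqrt b := Real.sqrt_lt_sqrt ha.le hab
  set s := Real.sqrt b / Real.sqrt a with hs
  have hs1 : 1 ≤ s := le_of_lt ((one_lt_div hu0).mpr huv)
  have hlogs : Real.log s = L / 2 := by
    rw [hs, Real.log_div hv0.ne' hu0.ne', Real.log_sqrt ha.le, Real.log_sqrt hb.le, hLdef]
    ring
  have hG : Real.sqrt (a * b) = Real.sqrt a * Real.sqrt b := Real.sqrt_mul ha.le b
  have hG2 : Real.sqrt (a * b) ^ 2 = a * b := Real.sq_sqrt (mul_nonneg ha.le hb.le)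
  set G := Real.sqrt (a * b) with hGdef
  have hG0 : 0 < G := Real.sqrt_pos.mpr (mul_pos ha hb)
  have hGas : a * s = G := by
    rw [hG, hs]
    field_simp
    nlinarith [hu2]
  have hs2 : s ^ 2 = b / a := by rw [hs, div_pow, hu2, hv2]
  -- key inequality 1 : G * L ≤ b - a  (GM ≤ LM)
  have key1 : G * L ≤ b - a := by
    have h := aux1 s hs1
    rw [hlogs, hs2] at h
    have h2 := mul_le_mul_of_nonneg_left h ha.le
    have e1 : a * (b / a - 1) = b - a := by field_simp
    have e2 : a * (2 * s * (L / 2)) = a * s * L := by ring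
    rw [e1, e2, hGas] at h2
    exact h2
  -- key inequality 2 : 2 * (b - a) ≤ (a + b) * L  (LM ≤ AM)
  have key2 : 2 * (b - a) ≤ (a + b) * L := by
    have h := aux2 s hs1
    rw [hlogs, hs2] at h
    have h2 := mul_le_mul_of_nonneg_left h ha.le
    have e1 : a * (b / a - 1) = b - a := by field_simp
    have e2 : a * ((b / a + 1) * (L / 2)) = (a + b) * L / 2 := by field_simp; ring
    rw [e1, e2] at h2
    nlinarith [h2]
  have hGM : G ≤ M := by
    rw [hMdef, le_div_iff₀ hL]; exact key1
  have hMA : M ≤ (a + b) / 2 := by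
    rw [hMdef, div_le_div_iff₀ hL two_pos]; linarith
  have hGA : G ≤ (a + b) / 2 := le_trans hGM hMA
  have haG : a ≤ G := by
    rw [hGdef]
    calc a = Real.sqrt (a * a) := (Real.sqrt_mul_self ha.le).symm
      _ ≤ Real.sqrt (a * b) := Real.sqrt_le_sqrt (by nlinarith)
  clear_value L M s G
  constructor
  · rw [hG2]
    have hdivG : a * b / M ≤ G := by
      rw [div_le_iff₀ hM]
      calc a * b = G * G := by rw [← hG2]; ring
        _ ≤ G * M := by nlinarith
    linarith
  · rw [hG2]
    set A := (a + b) / 2 with hA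
    have hA0 : 0 < A := by rw [hA]; linarith
    set S := Real.sqrt (A * M) with hS
    have hS2 : S ^ 2 = A * M := Real.sq_sqrt (mul_nonneg hA0.le hM.le)
    have hS0 : 0 ≤ S := Real.sqrt_nonneg _
    clear_value A S
    have hSA : S ≤ A := by
      rw [hS]
      calc Real.sqrt (A * M) ≤ Real.sqrt (A * A) := Real.sqrt_le_sqrt (mul_le_mul_of_nonneg_left hMA hA0.le)
        _ = A := Real.sqrt_mul_self hA0.le
    have h1 : S - G ≤ b - a := by
      have : A - a ≤ b - a := by rw [hA]; linarith
      linarith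
    have h2 : (0:ℝ) ≤ S + G := by positivity
    have key : A * M - a * b ≤ (S + G) * (b - a) := by
      calc A * M - a * b = (S - G) * (S + G) := by rw [← hS2, ← hG2]; ring
        _ ≤ (b - a) * (S + G) := mul_le_mul_of_nonneg_right h1 h2
        _ = (S + G) * (b - a) := by ring
    have hML : (b - a) / M = L := by
      have hba : b - a ≠ 0 := by linarith
      rw [hMdef]
      field_simp
    calc A - a * b / M = (A * M - a * b) / M := by field_simp
      _ ≤ ((S + G) * (b - a)) / M := by gcongr
      _ = (S + G) * L := by rw [mul_div_assoc, hML]
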